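/- Let F_{U,ρ} denote the skew-symmetric endomorphism of h₃ with matrix [[0,-ρ,-β],[ρ,0,-α],[β,α,0]] in the basis e₁,e₂,e₃, where U = βe₁+αe₂. Under the action (B,r)·F_{U,ρ} = r·det(B)·F_{BU,ρ} of O(2)×ℝ*, if U ≠ 0 then there exist B ∈ SO(2) and r ∈ ℝ* with (B,r)·F_{U,ρ} = F_{e₁, ρ/‖U‖}. -/

import Mathlib

/-- The Lorentz force F_{U,ρ} on h₃, with U = βe₁ + αe₂ encoded as
    `U = ![β, α]`, given by the matrix [[0,-ρ,-β],[ρ,0,-α],[β,α,0]]. -/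
def Fm (U : Fin 2 → ℝ) (ρ : ℝ) : Matrix (Fin 3) (Fin 3) ℝ :=
  ![![0, -ρ, -(U 0)], ![ρ, 0, -(U 1)], ![U 0, U 1, 0]]

/- If U ≠ 0 there exist B ∈ SO(2) and r ∈ ℝ* with
   (B,r)·F_{U,ρ} = r·det(B)·F_{BU,ρ} = F_{e₁, ρ/‖U‖}. -/
theorem stmt_6 (β α ρ : ℝ) (hU : ![β, α] ≠ (0 : Fin 2 → ℝ)) :
    ∃ B : Matrix (Fin 2) (Fin 2) ℝ, ∃ r : ℝ,
      B.transpose * B = 1 ∧ B.det = 1 ∧ r ≠ 0 ∧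
      (r * B.det) • Fm (B.mulVec ![β, α]) ρ
        = Fm ![1, 0] (ρ / Real.sqrt (β ^ 2 + α ^ 2)) := by
  have hab : β ≠ 0 ∨ α ≠ 0 := by
    by_contra h; push_neg at h; apply hU; funext i; fin_cases i <;> simp [h.1, h.2]
  have hs : β ^ 2 + α ^ 2 > 0 := by
    rcases hab with h | h
    · nlinarith [sq_nonneg α, sq_abs β, abs_pos.mpr h]
    · nlinarith [sq_nonneg β, sq_abs α, abs_pos.mpr h]
  set n := Real.sqrt (β ^ 2 + α ^ 2) with hn
  have hnpos : 0 < n := Real.sqrt_pos.mpr hs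
  have hn0 : n ≠ 0 := ne_of_gt hnpos
  have hn2 : n ^ 2 = β ^ 2 + α ^ 2 := Real.sq_sqrt hs.le
  refine ⟨n⁻¹ • (![![β, α], ![-α, β]] : Matrix (Fin 2) (Fin 2) ℝ), n⁻¹, ?_, ?_, inv_ne_zero hn0, ?_⟩
  · ext i j
    fin_cases i <;> fin_cases j <;>
      erw [Matrix.mul_apply] <;>
      simp [Matrix.mul_apply, Fin.sum_univ_succ, Matrix.one_apply, Matrix.smul_apply,
        Matrix.transpose] <;>
      field_simp <;> nlinarith [hn2]
  · rw [show Matrix.det (n⁻¹ • (![![β, α], ![-α, β]] : Matrix (Fin 2) (Fin 2) ℝ))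
        = n⁻¹ * β * (n⁻¹ * β) - n⁻¹ * α * (n⁻¹ * -α) by
      erw [Matrix.det_fin_two]; simp [Matrix.smul_apply]]
    field_simp
    nlinarith [hn2]
  · have hdet : Matrix.det (n⁻¹ • (![![β, α], ![-α, β]] : Matrix (Fin 2) (Fin 2) ℝ)) = 1 := by
      rw [show Matrix.det (n⁻¹ • (![![β, α], ![-α, β]] : Matrix (Fin 2) (Fin 2) ℝ))
          = n⁻¹ * β * (n⁻¹ * β) - n⁻¹ * α * (n⁻¹ * -α) by
        erw [Matrix.det_fin_two]; simp [Matrix.smul_apply]]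
      field_simp
      nlinarith [hn2]
    rw [hdet, mul_one]
    have hmul : Matrix.mulVec (n⁻¹ • (![![β, α], ![-α, β]] : Matrix (Fin 2) (Fin 2) ℝ)) ![β, α]
        = ![n, 0] := by
      funext i
      fin_cases i <;>
        simp [Matrix.mulVec, dotProduct, Fin.sum_univ_succ, Matrix.smul_apply] <;>
        field_simp <;> nlinarith [hn2]
    rw [hmul]
    ext i j
    fin_cases i <;> fin_cases j <;>
      simp only [Matrix.smul_apply] <;>
      simp [Fm, Matrix.smul_apply, div_eq_mul_inv, Matrix.vecHead, Matrix.vecTail] <;> field_simp
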